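/- Any cellular automaton (sliding block code) F : Σ^ℤ → Σ^ℤ with radius r is Lipschitz with constant 2r+1 with respect to the Besicovitch pseudometric: d_B(F(x), F(y)) ≤ (2r+1)·d_B(x,y). -/

import Mathlib

open Filter

/-- Hamming distance between `x` and `y` on the coordinate interval `[a, b]`. -/
noncomputable def hamIcc {A : Type*} (x y : ℤ → A) (a b : ℤ) : ℕ :=
  @Finset.card ℤ (@Finset.filter ℤ (fun i => x i ≠ y i) (Classical.decPred _) (Finset.Icc a b))

/-- The Besicovitch pseudodistance on `A^ℤ`. -/
noncomputable def dB {A : Type*} (x y : ℤ → A) : ℝ :=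
  atTop.limsup fun n : ℕ => (hamIcc x y (-(n : ℤ)) n : ℝ) / (2 * n + 1)

/-- The Weyl pseudodistance on `A^ℤ`. -/
noncomputable def dW {A : Type*} (x y : ℤ → A) : ℝ :=
  atTop.limsup fun n : ℕ => ⨆ m : ℤ, (hamIcc x y (m - n) (m + n) : ℝ) / (2 * n + 1)

/-- The shift map. -/
def shiftMap {A : Type*} (x : ℤ → A) : ℤ → A := fun i => x (i + 1)

/-- A subshift: a shift-invariant subset of `A^ℤ` closed in the Cantor topology. -/
def IsSubshift {A : Type*} (X : Set (ℤ → A)) : Prop :=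
  (∀ x ∈ X, shiftMap x ∈ X) ∧ (∀ x ∈ X, (fun i => x (i - 1)) ∈ X) ∧
  (∀ x : ℤ → A, (∀ n : ℕ, ∃ y ∈ X, ∀ i : ℤ, |i| ≤ (n : ℤ) → y i = x i) → x ∈ X)

/-- The word `w` occurs in (some point of) `X`. -/
def occursIn {A : Type*} (X : Set (ℤ → A)) {k : ℕ} (w : Fin k → A) : Prop :=
  ∃ x ∈ X, ∃ i : ℤ, ∀ j : Fin k, x (i + j) = w j

/-- A shift of finite type: defined by a clopen window condition. -/
def IsSFT {A : Type*} (X : Set (ℤ → A)) : Prop :=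
  ∃ (k : ℕ) (P : (Fin k → A) → Prop), X = {x | ∀ i : ℤ, P (fun j => x (i + j))}

/-- A sliding block code (cellular automaton when `A = B`) of some radius `r`. -/
def IsSlidingBlock {A B : Type*} (φ : (ℤ → A) → (ℤ → B)) : Prop :=
  ∃ (r : ℕ) (f : (Fin (2 * r + 1) → A) → B), ∀ x i, φ x i = f fun j => x (i - r + j)

/-- A sofic shift: the image of an SFT under a sliding block code. -/
def IsSofic {A : Type*} (X : Set (ℤ → A)) : Prop :=
  ∃ (B : Type) (_ : Fintype B) (Y : Set (ℤ → B)) (φ : (ℤ → B) → (ℤ → A)),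
    IsSFT Y ∧ IsSlidingBlock φ ∧ X = φ '' Y

/-- Topological mixing for shift spaces, in terms of words of the language. -/
def IsMixingShift {A : Type*} (X : Set (ℤ → A)) : Prop :=
  ∀ (k l : ℕ) (u : Fin k → A) (v : Fin l → A), occursIn X u → occursIn X v →
    ∃ N : ℕ, ∀ n ≥ N, ∃ x ∈ X, ∃ i : ℤ,
      (∀ j : Fin k, x (i + j) = u j) ∧ (∀ j : Fin l, x (i + k + n + j) = v j)

/-- Topological entropy of a shift space. -/
noncomputable def shiftEntropy {A : Type*} (X : Set (ℤ → A)) : ℝ :=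
  atTop.limsup fun n : ℕ => Real.log (Set.ncard {w : Fin n → A | occursIn X w}) / n

/-- The periodic configuration `∞w∞` with period word `w`. -/
def perPt {A : Type*} {n : ℕ} (hn : 0 < n) (w : Fin n → A) : ℤ → A := fun i =>
  w ⟨(i % (n : ℤ)).toNat, by
    have h1 : (0 : ℤ) < (n : ℤ) := by exact_mod_cast hn
    have h2 := Int.emod_nonneg i (by omega : (n : ℤ) ≠ 0)
    have h3 := Int.emod_lt_of_pos i h1
    omega⟩

/-- The density coding `U' : [0,1] → {0,1}^ℕ`: the dyadic interval of `ℕ` containing `n`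
has left endpoint `2^(Nat.log 2 (n+1)) - 1` and length `L = 2^(Nat.log 2 (n+1))`; it is
filled with `⌊x·L⌋` zeros (`false`) followed by ones (`true`). -/
noncomputable def Uprime (x : ℝ) (n : ℕ) : Bool :=
  decide (⌊x * 2 ^ Nat.log 2 (n + 1)⌋ ≤ ((n : ℤ) + 1 - 2 ^ Nat.log 2 (n + 1)))

/-- The two-sided version `T'(x) = U'(x)^R.U'(x)`. -/
noncomputable def Tprime (x : ℝ) : ℤ → Bool := fun i =>
  if 0 ≤ i then Uprime x i.toNat else Uprime x (-i - 1).toNat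

/-- The one-sided Besicovitch pseudodistance. -/
noncomputable def dB1 {A : Type*} (u v : ℕ → A) : ℝ :=
  atTop.limsup fun n : ℕ =>
    ((@Finset.filter ℕ (fun i => u i ≠ v i) (Classical.decPred _) (Finset.range n)).card : ℝ) / n

/-- a cellular automaton of radius `r` is `(2r+1)`-Lipschitz for `dB`. -/
lemma hamIcc_le {A : Type*} (x y : ℤ → A) (n : ℕ) :
    hamIcc x y (-(n : ℤ)) n ≤ 2 * n + 1 := by
  unfold hamIcc
  refine le_trans (@Finset.card_filter_le ℤ _ _ (Classical.decPred _)) ?_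
  rw [Int.card_Icc]
  omega

lemma key_count {A : Type*} (r : ℕ) (f : (Fin (2 * r + 1) → A) → A)
    (F : (ℤ → A) → (ℤ → A)) (hF : ∀ x i, F x i = f fun j => x (i - r + j))
    (x y : ℤ → A) (n : ℕ) :
    hamIcc (F x) (F y) (-(n : ℤ)) n ≤ (2 * r + 1) * hamIcc x y (-((n + r : ℕ) : ℤ)) ((n + r : ℕ)) := by
  classical
  unfold hamIcc
  set T := @Finset.filter ℤ (fun i => x i ≠ y i) (Classical.decPred _)
      (Finset.Icc (-((n + r : ℕ) : ℤ)) ((n + r : ℕ))) with hT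
  have hsub : @Finset.filter ℤ (fun i => F x i ≠ F y i) (Classical.decPred _)
      (Finset.Icc (-(n : ℤ)) n) ⊆ T.biUnion (fun k => Finset.Icc (k - r) (k + r)) := by
    intro i hi
    simp only [Finset.mem_filter, Finset.mem_Icc] at hi
    obtain ⟨⟨hi1, hi2⟩, hne⟩ := hi
    have : ∃ j : Fin (2 * r + 1), x (i - r + j) ≠ y (i - r + j) := by
      by_contra h
      push_neg at h
      apply hne
      rw [hF, hF]
      congr 1
      funext j
      exact h j
    obtain ⟨j, hj⟩ := this
    have hjv : (j : ℤ) ≤ 2 * r := by exact_mod_cast Nat.lt_succ_iff.mp j.isLt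
    have hj0 : (0 : ℤ) ≤ (j : ℤ) := Int.natCast_nonneg _
    refine Finset.mem_biUnion.2 ⟨i - r + j, ?_, ?_⟩
    · simp only [hT, Finset.mem_filter, Finset.mem_Icc]
      refine ⟨⟨?_, ?_⟩, hj⟩ <;> push_cast <;> omega
    · simp only [Finset.mem_Icc]; omega
  refine le_trans (Finset.card_le_card hsub) ?_
  refine le_trans (Finset.card_biUnion_le) ?_
  rw [mul_comm]
  refine le_trans (Finset.sum_le_card_nsmul T _ (2 * r + 1) ?_) (le_of_eq (by simp [mul_comm]))
  intro k _
  rw [Int.card_Icc]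
  omega

theorem ca_lipschitz_dB {A : Type*} [Fintype A] (r : ℕ)
    (f : (Fin (2 * r + 1) → A) → A) (F : (ℤ → A) → (ℤ → A))
    (hF : ∀ x i, F x i = f fun j => x (i - r + j)) :
    ∀ x y : ℤ → A, dB (F x) (F y) ≤ (2 * r + 1) * dB x y := by
  intro x y
  set b : ℕ → ℝ := fun n => (hamIcc x y (-(n : ℤ)) n : ℝ) / (2 * n + 1) with hb
  set a : ℕ → ℝ := fun n => (hamIcc (F x) (F y) (-(n : ℤ)) n : ℝ) / (2 * n + 1) with ha
  have hb01 : ∀ n, 0 ≤ b n ∧ b n ≤ 1 := by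
    intro n
    have hd : (0 : ℝ) < 2 * n + 1 := by positivity
    constructor
    · positivity
    · rw [hb, div_le_one hd]
      exact_mod_cast hamIcc_le x y n
  have ha0 : ∀ n, 0 ≤ a n := fun n => by positivity
  have hbbd : IsBoundedUnder (· ≤ ·) atTop b :=
    isBoundedUnder_of ⟨1, fun n => (hb01 n).2⟩
  have habd : IsBoundedUnder (· ≤ ·) atTop a :=
    isBoundedUnder_of ⟨(2 * r + 1 : ℝ), fun n => by
      have hd : (0 : ℝ) < 2 * n + 1 := by positivity
      rw [ha, div_le_iff₀ hd]
      have h1 : (hamIcc (F x) (F y) (-(n : ℤ)) n : ℝ) ≤ 2 * n + 1 := by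
        exact_mod_cast hamIcc_le (F x) (F y) n
      nlinarith⟩
  have hacb : IsCoboundedUnder (· ≤ ·) atTop a :=
    isCoboundedUnder_le_of_eventually_le atTop (Eventually.of_forall ha0)
  -- L := dB x y
  set L := dB x y with hL
  have hLb : L = atTop.limsup b := rfl
  -- main step: for every ε > 0, limsup a ≤ (2r+1)*L + ε
  have main : ∀ ε : ℝ, 0 < ε → atTop.limsup a ≤ (2 * r + 1) * L + ε := by
    intro ε hε
    set ε' : ℝ := ε / (2 * (2 * r + 1)) with hε'
    have hε'pos : 0 < ε' := by positivity
    have hev1 : ∀ᶠ n : ℕ in atTop, b (n + r) < L + ε' := by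
      have : ∀ᶠ m : ℕ in atTop, b m < L + ε' := by
        apply eventually_lt_of_limsup_lt _ hbbd
        rw [← hLb]; linarith
      rw [← Filter.map_add_atTop_eq_nat r] at this
      exact this
    have hev2 : ∀ᶠ n : ℕ in atTop, (2 * r : ℝ) / (2 * n + 1) < ε' := by
      rcases eq_or_lt_of_le (Nat.zero_le r) with hr | hr
      · refine Eventually.of_forall fun n => ?_
        rw [← hr]
        simpa using hε'pos
      · have hlim : Filter.Tendsto (fun n : ℕ => (2 * r : ℝ) / (2 * n + 1)) atTop (nhds 0) := by
          apply Filter.Tendsto.div_atTop tendsto_const_nhds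
          apply Filter.tendsto_atTop_add_const_right
          exact (tendsto_natCast_atTop_atTop (R := ℝ)).const_mul_atTop (by norm_num)
        have := hlim.eventually (eventually_lt_nhds hε'pos)
        simpa using this
    have hineq : ∀ᶠ n : ℕ in atTop, a n ≤ (2 * r + 1) * L + ε := by
      filter_upwards [hev1, hev2] with n h1 h2
      have hd1 : (0 : ℝ) < 2 * n + 1 := by positivity
      have hd2 : (0 : ℝ) < 2 * ((n : ℝ) + r) + 1 := by positivity
      have hcount : (hamIcc (F x) (F y) (-(n : ℤ)) n : ℝ)
          ≤ (2 * r + 1) * (hamIcc x y (-((n + r : ℕ) : ℤ)) ((n + r : ℕ)) : ℝ) := by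
        exact_mod_cast key_count r f F hF x y n
      set H : ℝ := (hamIcc x y (-((n + r : ℕ) : ℤ)) ((n + r : ℕ)) : ℝ) with hH
      have hH0 : 0 ≤ H := by positivity
      have hHle : H ≤ 2 * ((n : ℝ) + r) + 1 := by
        have h' : (hamIcc x y (-((n + r : ℕ) : ℤ)) ((n + r : ℕ)) : ℝ)
            ≤ ((2 * (n + r) + 1 : ℕ) : ℝ) := Nat.cast_le.2 (hamIcc_le x y (n + r))
        rw [hH]
        push_cast at h' ⊢
        linarith
      -- a n ≤ (2r+1) * H / (2n+1)
      have step1 : a n ≤ (2 * r + 1) * (H / (2 * n + 1)) := by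
        have hrfl : a n = (hamIcc (F x) (F y) (-(n : ℤ)) n : ℝ) / (2 * n + 1) := rfl
        rw [hrfl, mul_div_assoc']
        gcongr
      -- H/(2n+1) ≤ H/(2(n+r)+1) + 2r/(2n+1)
      have step2 : H / (2 * n + 1) ≤ H / (2 * ((n : ℝ) + r) + 1) + 2 * r / (2 * n + 1) := by
        rw [div_add_div _ _ (ne_of_gt hd2) (ne_of_gt hd1), div_le_div_iff₀ hd1 (by positivity)]
        nlinarith [mul_nonneg (mul_nonneg (sub_nonneg.2 hHle)
          (by positivity : (0:ℝ) ≤ 2 * (r:ℝ))) hd1.le]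
      have hbval : H / (2 * ((n : ℝ) + r) + 1) = b (n + r) := by
        rw [hb, hH]
        push_cast
        ring
      calc a n ≤ (2 * r + 1) * (H / (2 * n + 1)) := step1
        _ ≤ (2 * r + 1) * (b (n + r) + 2 * r / (2 * n + 1)) := by
            apply mul_le_mul_of_nonneg_left _ (by positivity)
            rw [← hbval]; exact step2
        _ ≤ (2 * r + 1) * (L + ε' + ε') := by
            apply mul_le_mul_of_nonneg_left _ (by positivity)
            linarith
        _ = (2 * r + 1) * L + (2 * r + 1) * (2 * ε') := by ring
        _ = (2 * r + 1) * L + ε := by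
            rw [hε']
            field_simp
    exact limsup_le_of_le hacb hineq
  -- conclude
  have : dB (F x) (F y) = atTop.limsup a := rfl
  rw [this]
  by_contra hcon
  push_neg at hcon
  have hε : 0 < (atTop.limsup a - (2 * r + 1) * L) / 2 := by linarith
  have := main _ hε
  linarith
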